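/- With z and ϑ defined via harmonic measures of the four arcs as above, as ζ → e^{iπ/4} within 𝔻 one has z(ζ) = (1+i)/2 + ((1−i)/π)(arg(e^{iπ/4}−ζ) − π/4) + O(|ζ−e^{iπ/4}|) and ϑ(ζ) = (√2/π)(arg(e^{iπ/4}−ζ) − π/4) + O(|ζ−e^{iπ/4}|), where arg(e^{iπ/4}−ζ) ∈ (−π/4, 3π/4). In particular, the closure of the image of ζ ↦ (z(ζ),ϑ(ζ)) contains the full straight segment in ℂ×ℝ with endpoints (1, √2/2) and (i, −√2/2). -/

import Mathlib

open Complex Metric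
set_option maxHeartbeats 2000000

/-- The four angles `π/4 + m·π/2`, `m = 0,1,2,3`. -/
noncomputable def arcAngle (m : Fin 4) : ℝ := Real.pi / 4 + (m : ℕ) * (Real.pi / 2)

lemma arctan_lip (x y : ℝ) : |Real.arctan x - Real.arctan y| ≤ |x - y| := by
  have := Convex.norm_image_sub_le_of_norm_deriv_le (f := Real.arctan) (C := 1)
    (s := Set.univ) (fun t _ => Real.differentiableAt_arctan t)
    (fun t _ => by
      rw [Real.deriv_arctan]
      rw [Real.norm_eq_abs, abs_of_pos (by positivity)]
      rw [div_le_one (by positivity)]; nlinarith [sq_nonneg t])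
    convex_univ (Set.mem_univ y) (Set.mem_univ x)
  simpa using this

lemma arg_arctan {z : ℂ} (hz : 0 < z.re) : Complex.arg z = Real.arctan (z.im / z.re) := by
  have h1 : |Complex.arg z| < Real.pi / 2 := Complex.abs_arg_lt_pi_div_two_iff.2 (Or.inl hz)
  obtain ⟨h2, h3⟩ := abs_lt.1 h1
  rw [← Complex.tan_arg z, Real.arctan_tan (by linarith) h3]

lemma arg_diff (v w : ℂ) (hv : 1/2 ≤ v.re) (hw : 1/2 ≤ w.re)
    (hav : ‖v‖ ≤ 3) :
    |Complex.arg v - Complex.arg w| ≤ 24 * ‖v - w‖ := by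
  have hv0 : 0 < v.re := by linarith
  have hw0 : 0 < w.re := by linarith
  rw [arg_arctan hv0, arg_arctan hw0]
  refine (arctan_lip _ _).trans ?_
  have h1 : v.im / v.re - w.im / w.re = (v.im * w.re - w.im * v.re) / (v.re * w.re) := by
    field_simp
  rw [h1, abs_div, abs_of_pos (by positivity : (0:ℝ) < v.re * w.re)]
  have h3 : (1:ℝ)/4 ≤ v.re * w.re := by nlinarith
  have him : |v.im| ≤ 3 := (Complex.abs_im_le_norm v).trans hav
  have hre : |v.re| ≤ 3 := (Complex.abs_re_le_norm v).trans hav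
  have hdre : |v.re - w.re| ≤ ‖v - w‖ := by
    simpa using Complex.abs_re_le_norm (v - w)
  have hdim : |v.im - w.im| ≤ ‖v - w‖ := by
    simpa using Complex.abs_im_le_norm (v - w)
  have hnum : |v.im * w.re - w.im * v.re| ≤ 6 * ‖v - w‖ := by
    have he : v.im * w.re - w.im * v.re = v.im * (w.re - v.re) + v.re * (v.im - w.im) := by ring
    rw [he]
    calc |v.im * (w.re - v.re) + v.re * (v.im - w.im)|
        ≤ |v.im * (w.re - v.re)| + |v.re * (v.im - w.im)| := abs_add_le _ _
      _ = |v.im| * |w.re - v.re| + |v.re| * |v.im - w.im| := by rw [abs_mul, abs_mul]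
      _ ≤ 3 * ‖v - w‖ + 3 * ‖v - w‖ := by
          have : |w.re - v.re| ≤ ‖v - w‖ := by rwa [abs_sub_comm]
          gcongr
      _ = 6 * ‖v - w‖ := by ring
  have hnn : (0:ℝ) ≤ ‖v - w‖ := norm_nonneg _
  rw [div_le_iff₀ (by positivity)]
  nlinarith



lemma exp_real_mul_I (r : ℝ) :
    Complex.exp ((r:ℂ) * I) = (Real.cos r : ℂ) + (Real.sin r : ℂ) * I := by
  rw [Complex.exp_mul_I, Complex.ofReal_cos, Complex.ofReal_sin]

lemma exp_comb (s t : ℝ) :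
    Complex.exp ((s:ℂ) * I) * Complex.exp ((t:ℂ) * I)
      = Complex.exp (((s + t : ℝ) : ℂ) * I) := by
  rw [← Complex.exp_add]; push_cast; ring_nf

lemma re_pos_of_ball {θ : ℝ} {ζ : ℂ} (hζ : ζ ∈ ball (0:ℂ) 1) :
    1 - ‖ζ‖ ≤ (1 - Complex.exp (-(θ:ℝ) * I) * ζ).re := by
  have h1 : |(Complex.exp (-(θ:ℝ) * I) * ζ).re| ≤ ‖ζ‖ := by
    refine (Complex.abs_re_le_norm _).trans ?_
    rw [norm_mul]
    rw [show ((-(θ:ℝ) : ℂ) * I) = ((-θ : ℝ) : ℂ) * I by push_cast; ring]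
    rw [Complex.norm_exp_ofReal_mul_I]
    simp
  have := abs_le.1 h1
  simp only [Complex.sub_re, Complex.one_re]
  linarith [this.2]

lemma branch_eq {θ : ℝ} {f : ℂ → ℝ} (hf : ContinuousOn f (ball 0 1))
    (hfa : ∀ ζ ∈ ball (0:ℂ) 1,
      (‖Complex.exp ((θ:ℝ) * I) - ζ‖ : ℂ) * Complex.exp ((f ζ : ℝ) * I)
        = Complex.exp ((θ:ℝ) * I) - ζ)
    (hf0 : f 0 = θ) :
    ∀ ζ ∈ ball (0:ℂ) 1, f ζ = θ + Complex.arg (1 - Complex.exp (-(θ:ℝ) * I) * ζ) := by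
  set u : ℂ → ℂ := fun ζ => 1 - Complex.exp (-(θ:ℝ) * I) * ζ with hu
  have habs : ∀ ζ ∈ ball (0:ℂ) 1, ‖ζ‖ < 1 := by
    intro ζ hζ; simpa [Complex.dist_eq] using mem_ball.1 hζ
  have hre : ∀ ζ ∈ ball (0:ℂ) 1, 0 < (u ζ).re := by
    intro ζ hζ
    have := re_pos_of_ball (θ := θ) hζ
    have := habs ζ hζ
    simp only [hu]
    linarith [re_pos_of_ball (θ := θ) hζ]
  have hexp : Complex.exp ((θ:ℝ) * I) * Complex.exp (-(θ:ℝ) * I) = 1 := by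
    rw [← Complex.exp_add]; ring_nf; exact Complex.exp_zero
  have hfac : ∀ ζ : ℂ, Complex.exp ((θ:ℝ) * I) - ζ = Complex.exp ((θ:ℝ) * I) * u ζ := by
    intro ζ; simp only [hu]; rw [mul_sub, mul_one, ← mul_assoc, hexp, one_mul]
  have habsu : ∀ ζ : ℂ, ‖Complex.exp ((θ:ℝ) * I) - ζ‖ = ‖u ζ‖ := by
    intro ζ; rw [hfac, norm_mul, Complex.norm_exp_ofReal_mul_I, one_mul]
  -- the multivaluedness: f ζ - θ - arg (u ζ) ∈ 2πℤ
  have hkey : ∀ ζ ∈ ball (0:ℂ) 1, ∃ n : ℤ, f ζ - θ - Complex.arg (u ζ) = n * (2 * Real.pi) := by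
    intro ζ hζ
    have hne : u ζ ≠ 0 := by
      intro h; have := hre ζ hζ; rw [h] at this; simp at this
    have h1 := hfa ζ hζ
    rw [habsu, hfac] at h1
    have h2 : (‖u ζ‖ : ℂ) * Complex.exp ((Complex.arg (u ζ) : ℝ) * I) = u ζ :=
      Complex.norm_mul_exp_arg_mul_I (u ζ)
    have habsne : (‖u ζ‖ : ℂ) ≠ 0 := by
      simpa using hne
    have h3 : Complex.exp ((f ζ : ℝ) * I)
        = Complex.exp ((θ:ℝ) * I) * Complex.exp ((Complex.arg (u ζ) : ℝ) * I) := by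
      apply mul_left_cancel₀ habsne
      rw [h1, ← mul_assoc, mul_comm ((‖u ζ‖ : ℂ)) (Complex.exp ((θ:ℝ) * I)),
        mul_assoc, h2]
    rw [← Complex.exp_add] at h3
    obtain ⟨n, hn⟩ := Complex.exp_eq_exp_iff_exists_int.1 h3
    refine ⟨n, ?_⟩
    have him := congrArg Complex.im hn
    simp at him
    rw [him]; ring
  -- continuity of F and integer-valuedness forces F = 0
  intro ζ hζ
  by_contra hne
  set F : ℂ → ℝ := fun ξ => f ξ - θ - Complex.arg (u ξ) with hF
  have hF0 : F 0 = 0 := by simp [hF, hf0, hu]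
  have hFζ : F ζ ≠ 0 := by
    simp only [hF]; intro h; apply hne; linarith [h]
  have hmap : ∀ t ∈ Set.Icc (0:ℝ) 1, (t:ℂ) * ζ ∈ ball (0:ℂ) 1 := by
    intro t ht
    rw [mem_ball, dist_zero_right, norm_mul, Complex.norm_real, Real.norm_eq_abs,
      _root_.abs_of_nonneg ht.1]
    calc t * ‖ζ‖ ≤ 1 * ‖ζ‖ := by
          have := norm_nonneg ζ; nlinarith [ht.2]
      _ < 1 := by rw [one_mul]; exact habs ζ hζ
  have hcont : ContinuousOn (fun t : ℝ => F ((t:ℂ) * ζ)) (Set.Icc 0 1) := by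
    have hc1 : ContinuousOn (fun t : ℝ => (t:ℂ) * ζ) (Set.Icc 0 1) :=
      (Complex.continuous_ofReal.mul continuous_const).continuousOn
    have hc2 : ContinuousOn (fun t : ℝ => f ((t:ℂ) * ζ)) (Set.Icc 0 1) :=
      hf.comp hc1 hmap
    have hc3 : ContinuousOn (fun t : ℝ => Complex.arg (u ((t:ℂ) * ζ))) (Set.Icc 0 1) := by
      intro t ht
      have hcu : ContinuousAt (fun t : ℝ => u ((t:ℂ) * ζ)) t := by
        apply Continuous.continuousAt
        simp only [hu]; continuity
      have harg : ContinuousAt Complex.arg (u ((t:ℂ) * ζ)) :=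
        Complex.continuousAt_arg (Or.inl (hre _ (hmap t ht)))
      have hcomp : ContinuousAt (fun s : ℝ => Complex.arg (u ((s:ℂ) * ζ))) t :=
        ContinuousAt.comp (f := fun s : ℝ => u ((s:ℂ) * ζ)) harg hcu
      exact hcomp.continuousWithinAt
    exact (hc2.sub continuousOn_const).sub hc3
  -- F values are multiples of 2π along the path
  have hFn : ∀ t ∈ Set.Icc (0:ℝ) 1, ∃ n : ℤ, F ((t:ℂ) * ζ) = n * (2 * Real.pi) := by
    intro t ht; exact hkey _ (hmap t ht)
  have he0 : ((0:ℝ):ℂ) * ζ = 0 := by norm_num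
  have he1 : ((1:ℝ):ℂ) * ζ = ζ := by norm_num
  obtain ⟨n, hn⟩ := hFn 1 (by norm_num)
  rw [he1] at hn
  have hnne : n ≠ 0 := by
    intro h; rw [h] at hn; simp at hn; exact hFζ hn
  have hπ := Real.pi_pos
  have hmid : ∃ t ∈ Set.Icc (0:ℝ) 1, F ((t:ℂ) * ζ) = Real.pi ∨ F ((t:ℂ) * ζ) = -Real.pi := by
    rcases lt_or_gt_of_ne hnne with hneg | hpos
    · have hle : (n:ℝ) ≤ -1 := by exact_mod_cast (by omega : n ≤ -1)
      have hmem : -Real.pi ∈ Set.Icc (F (((1:ℝ):ℂ) * ζ)) (F (((0:ℝ):ℂ) * ζ)) := by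
        rw [he0, he1, hF0, hn]
        constructor
        · nlinarith
        · linarith
      obtain ⟨t, ht, hval⟩ := intermediate_value_Icc' (by norm_num : (0:ℝ) ≤ 1) hcont hmem
      exact ⟨t, ht, Or.inr hval⟩
    · have hle : (1:ℝ) ≤ (n:ℝ) := by exact_mod_cast hpos
      have hmem : Real.pi ∈ Set.Icc (F (((0:ℝ):ℂ) * ζ)) (F (((1:ℝ):ℂ) * ζ)) := by
        rw [he0, he1, hF0, hn]
        constructor
        · linarith
        · nlinarith
      obtain ⟨t, ht, hval⟩ := intermediate_value_Icc (by norm_num : (0:ℝ) ≤ 1) hcont hmem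
      exact ⟨t, ht, Or.inl hval⟩
  obtain ⟨t, ht, hval⟩ := hmid
  obtain ⟨m, hm⟩ := hFn t ht
  have hπne := Real.pi_ne_zero
  rcases hval with h | h <;> rw [hm] at h
  · have h2 : (2 * (m:ℝ) - 1) * Real.pi = 0 := by linarith
    rcases mul_eq_zero.1 h2 with h3 | h3
    · have : (2 * m : ℤ) = 1 := by exact_mod_cast (by linarith : (2*(m:ℝ)) = 1)
      omega
    · exact hπne h3
  · have h2 : (2 * (m:ℝ) + 1) * Real.pi = 0 := by linarith
    rcases mul_eq_zero.1 h2 with h3 | h3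
    · have : (2 * m : ℤ) = -1 := by exact_mod_cast (by linarith : (2*(m:ℝ)) = -1)
      omega
    · exact hπne h3

/-- Boundary behavior near the corner `e^{iπ/4}`: with the continuous branch
`a 0 ζ = arg(e^{iπ/4}−ζ) ∈ (−π/4, 3π/4)`,
`z(ζ) = (1+i)/2 + ((1−i)/π)(arg(e^{iπ/4}−ζ) − π/4) + O(|ζ−e^{iπ/4}|)` and
`ϑ(ζ) = (√2/π)(arg(e^{iπ/4}−ζ) − π/4) + O(|ζ−e^{iπ/4}|)` as `ζ → e^{iπ/4}` in `𝔻`.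
In particular, the closure of the image of `ζ ↦ (z(ζ),ϑ(ζ))` contains the straight
segment in `ℂ×ℝ` with endpoints `(1, √2/2)` and `(i, −√2/2)`. -/
theorem aztec_surface_corner_asymptotics
    (a : Fin 4 → ℂ → ℝ)
    (hacont : ∀ m, ContinuousOn (a m) (ball 0 1))
    (haarg : ∀ m, ∀ ζ ∈ ball (0:ℂ) 1,
      (‖Complex.exp ((arcAngle m : ℝ) * I) - ζ‖ : ℂ)
          * Complex.exp ((a m ζ : ℝ) * I)
        = Complex.exp ((arcAngle m : ℝ) * I) - ζ)
    (ha0 : ∀ m, a m 0 = arcAngle m)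
    (hmE hmN hmW hmS : ℂ → ℝ)
    (hE : ∀ ζ, hmE ζ = (1 / Real.pi) * (a 0 ζ - (a 3 ζ - 2 * Real.pi)) - 1/4)
    (hN : ∀ ζ, hmN ζ = (1 / Real.pi) * (a 1 ζ - a 0 ζ) - 1/4)
    (hW : ∀ ζ, hmW ζ = (1 / Real.pi) * (a 2 ζ - a 1 ζ) - 1/4)
    (hS : ∀ ζ, hmS ζ = (1 / Real.pi) * (a 3 ζ - a 2 ζ) - 1/4)
    (z : ℂ → ℂ) (ϑ : ℂ → ℝ)
    (hz : ∀ ζ, z ζ = (hmE ζ : ℝ) + I * (hmN ζ : ℝ) - (hmW ζ : ℝ) - I * (hmS ζ : ℝ))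
    (hϑ : ∀ ζ, ϑ ζ = (Real.sqrt 2 / 2) * (hmE ζ - hmN ζ + hmW ζ - hmS ζ)) :
    (∀ ζ ∈ ball (0:ℂ) 1, a 0 ζ ∈ Set.Ioo (-(Real.pi / 4)) (3 * Real.pi / 4)) ∧
    (∃ C > (0:ℝ), ∃ δ > (0:ℝ), ∀ ζ ∈ ball (0:ℂ) 1,
      ‖ζ - Complex.exp ((Real.pi / 4 : ℝ) * I)‖ < δ →
      ‖z ζ - ((1 + I) / 2
            + ((1 - I) / Real.pi) * ((a 0 ζ : ℝ) - Real.pi / 4))‖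
          ≤ C * ‖ζ - Complex.exp ((Real.pi / 4 : ℝ) * I)‖ ∧
        |ϑ ζ - (Real.sqrt 2 / Real.pi) * (a 0 ζ - Real.pi / 4)|
          ≤ C * ‖ζ - Complex.exp ((Real.pi / 4 : ℝ) * I)‖) ∧
    segment ℝ (((1 : ℂ), (Real.sqrt 2 / 2 : ℝ)))
        ((I, -(Real.sqrt 2 / 2 : ℝ)))
      ⊆ closure ((fun ζ => (z ζ, ϑ ζ)) '' ball (0:ℂ) 1) := by
  have hπ := Real.pi_pos
  have hπne := Real.pi_ne_zero
  have hπC : (Real.pi : ℂ) ≠ 0 := by exact_mod_cast hπne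
  have hA0 : arcAngle 0 = Real.pi/4 := by
    norm_num [arcAngle, show ((0 : Fin 4) : ℕ) = 0 from rfl]
  have hA1 : arcAngle 1 = 3*Real.pi/4 := by
    norm_num [arcAngle, show ((1 : Fin 4) : ℕ) = 1 from rfl]; ring
  have hA2 : arcAngle 2 = 5*Real.pi/4 := by
    norm_num [arcAngle, show ((2 : Fin 4) : ℕ) = 2 from rfl]; ring
  have hA3 : arcAngle 3 = 7*Real.pi/4 := by
    norm_num [arcAngle, show ((3 : Fin 4) : ℕ) = 3 from rfl]; ring
  -- the branch formula for each m
  have hbr : ∀ m, ∀ ζ ∈ ball (0:ℂ) 1,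
      a m ζ = arcAngle m + Complex.arg (1 - Complex.exp (-((arcAngle m : ℝ):ℂ) * I) * ζ) :=
    fun m => branch_eq (hacont m) (haarg m) (ha0 m)
  have hreu : ∀ (θ : ℝ), ∀ ζ ∈ ball (0:ℂ) 1,
      0 < (1 - Complex.exp (-(θ:ℂ) * I) * ζ).re := by
    intro θ ζ hζ
    have h1 := re_pos_of_ball (θ := θ) hζ
    have h2 : ‖ζ‖ < 1 := by simpa [Complex.dist_eq] using mem_ball.1 hζ
    linarith
  -- Part 1
  have part1 : ∀ ζ ∈ ball (0:ℂ) 1, a 0 ζ ∈ Set.Ioo (-(Real.pi / 4)) (3 * Real.pi / 4) := by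
    intro ζ hζ
    rw [hbr 0 ζ hζ, hA0]
    have h1 : |Complex.arg (1 - Complex.exp (-((Real.pi/4 : ℝ):ℂ) * I) * ζ)| < Real.pi/2 := by
      apply Complex.abs_arg_lt_pi_div_two_iff.2
      left
      have := hreu (Real.pi/4) ζ hζ
      simpa using this
    obtain ⟨h2, h3⟩ := abs_lt.1 h1
    rw [hA0] at *
    constructor <;> [linarith; linarith]
  -- corner point and corner values
  set ζ₀ : ℂ := Complex.exp (((Real.pi/4 : ℝ):ℂ) * I) with hζ₀
  have hv1 : (1:ℂ) - Complex.exp (-((arcAngle 1 : ℝ):ℂ) * I) * ζ₀ = 1 + I := by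
    rw [hζ₀, hA1, show -((3*Real.pi/4 : ℝ):ℂ) * I = (((-(3*Real.pi/4)) : ℝ):ℂ) * I by push_cast; ring,
      exp_comb, show (-(3*Real.pi/4) + Real.pi/4 : ℝ) = -(Real.pi/2) by ring, exp_real_mul_I]
    simp [Real.cos_pi_div_two, Real.sin_pi_div_two]
  have hv2 : (1:ℂ) - Complex.exp (-((arcAngle 2 : ℝ):ℂ) * I) * ζ₀ = 2 := by
    rw [hζ₀, hA2, show -((5*Real.pi/4 : ℝ):ℂ) * I = (((-(5*Real.pi/4)) : ℝ):ℂ) * I by push_cast; ring,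
      exp_comb, show (-(5*Real.pi/4) + Real.pi/4 : ℝ) = -(Real.pi) by ring, exp_real_mul_I]
    simp [Real.cos_pi, Real.sin_pi]
    norm_num
  have hv3 : (1:ℂ) - Complex.exp (-((arcAngle 3 : ℝ):ℂ) * I) * ζ₀ = 1 - I := by
    rw [hζ₀, hA3, show -((7*Real.pi/4 : ℝ):ℂ) * I = (((-(7*Real.pi/4)) : ℝ):ℂ) * I by push_cast; ring,
      exp_comb, show (-(7*Real.pi/4) + Real.pi/4 : ℝ) = Real.pi/2 + -(2*Real.pi) by ring,
      ← exp_comb, exp_real_mul_I, exp_real_mul_I]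
    simp [Real.cos_pi_div_two, Real.sin_pi_div_two, Real.cos_two_pi, Real.sin_two_pi]
  have harg1 : Complex.arg (1 + I) = Real.pi/4 := by
    rw [arg_arctan (by simp : (0:ℝ) < (1+I).re)]
    simp [Real.arctan_one]
  have harg2 : Complex.arg 2 = 0 := by simp [Complex.arg_ofReal_of_nonneg]
  have harg3 : Complex.arg (1 - I) = -(Real.pi/4) := by
    rw [arg_arctan (by simp : (0:ℝ) < (1-I).re)]
    simp [Real.arctan_one, Real.arctan_neg]
  -- Part 2 with C = 100, δ = 1/2
  have part2 : ∀ ζ ∈ ball (0:ℂ) 1,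
      ‖ζ - ζ₀‖ < 1/2 →
      ‖z ζ - ((1 + I) / 2
            + ((1 - I) / Real.pi) * ((a 0 ζ : ℝ) - Real.pi / 4))‖
          ≤ 100 * ‖ζ - ζ₀‖ ∧
        |ϑ ζ - (Real.sqrt 2 / Real.pi) * (a 0 ζ - Real.pi / 4)|
          ≤ 100 * ‖ζ - ζ₀‖ := by
    intro ζ hζ hδ
    set D := ‖ζ - ζ₀‖ with hD
    have hD0 : 0 ≤ D := norm_nonneg _
    -- deviations of a m from the corner limits are ≤ 24 D
    have hdev : ∀ m : Fin 4, ∀ v : ℂ,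
        ((1:ℂ) - Complex.exp (-((arcAngle m : ℝ):ℂ) * I) * ζ₀ = v) →
        (1 ≤ v.re) → (‖v‖ ≤ 5/2) →
        |a m ζ - (arcAngle m + Complex.arg v)| ≤ 24 * D := by
      intro m v hv hvre hvabs
      set w : ℂ := 1 - Complex.exp (-((arcAngle m : ℝ):ℂ) * I) * ζ with hw
      have hdwv : w - v = Complex.exp (-((arcAngle m : ℝ):ℂ) * I) * (ζ₀ - ζ) := by
        rw [hw, ← hv]; ring
      have habsd : ‖w - v‖ = D := by
        rw [hdwv, norm_mul,
          show -((arcAngle m : ℝ):ℂ) * I = (((-(arcAngle m)) : ℝ):ℂ) * I by push_cast; ring,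
          Complex.norm_exp_ofReal_mul_I, one_mul, hD, ← norm_neg]
        ring_nf
      have hwre : 1/2 ≤ w.re := by
        have h1 : |(w - v).re| ≤ ‖w - v‖ := Complex.abs_re_le_norm _
        have h2 := abs_le.1 h1
        have : (w - v).re = w.re - v.re := by simp
        rw [this] at h2
        rw [habsd] at h2
        linarith [h2.1, hδ]
      have hwabs : ‖w‖ ≤ 3 := by
        have h := norm_add_le v (w - v)
        rw [habsd] at h
        have hvw : v + (w - v) = w := by ring
        rw [hvw] at h
        linarith
      have := arg_diff w v hwre (by linarith) hwabs
      rw [habsd] at this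
      rw [hbr m ζ hζ, ← hw]
      calc |arcAngle m + Complex.arg w - (arcAngle m + Complex.arg v)|
          = |Complex.arg w - Complex.arg v| := by ring_nf
        _ ≤ 24 * D := this
    have hd1 := hdev 1 (1 + I) hv1 (by simp) (by
      refine (Complex.norm_le_abs_re_add_abs_im _).trans ?_; norm_num)
    have hd2 := hdev 2 2 hv2 (by norm_num) (by
      refine (Complex.norm_le_abs_re_add_abs_im _).trans ?_; norm_num)
    have hd3 := hdev 3 (1 - I) hv3 (by simp) (by
      refine (Complex.norm_le_abs_re_add_abs_im _).trans ?_; norm_num)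
    rw [hA1, harg1] at hd1
    rw [hA2, harg2] at hd2
    rw [hA3, harg3] at hd3
    have hL1 : (3*Real.pi/4 + Real.pi/4) = Real.pi := by ring
    have hL2 : (5*Real.pi/4 + 0) = 5*Real.pi/4 := by ring
    have hL3 : (7*Real.pi/4 + -(Real.pi/4)) = 3*Real.pi/2 := by ring
    rw [hL1] at hd1; rw [hL2] at hd2; rw [hL3] at hd3
    constructor
    · -- complex bound
      have hzd : z ζ - ((1 + I) / 2 + ((1 - I) / Real.pi) * ((a 0 ζ : ℝ) - Real.pi / 4))
          = (1/(Real.pi:ℂ)) * ((1+I)*((a 1 ζ - Real.pi : ℝ):ℂ)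
            + (-1+I)*((a 2 ζ - 5*Real.pi/4 : ℝ):ℂ) + (-1-I)*((a 3 ζ - 3*Real.pi/2 : ℝ):ℂ)) := by
        rw [hz, hE, hN, hW, hS]
        push_cast
        field_simp
        ring
      have hb : ∀ (c : ℂ) (x : ℝ), ‖c‖ ≤ 2 → |x| ≤ 24 * D →
          ‖c * (x:ℂ)‖ ≤ 48 * D := by
        intro c x hc hx
        rw [norm_mul, Complex.norm_real, Real.norm_eq_abs]
        nlinarith [norm_nonneg c, abs_nonneg x]
      have h1 := hb (1+I) _ (by refine (Complex.norm_le_abs_re_add_abs_im _).trans ?_; norm_num) hd1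
      have h2 := hb (-1+I) _ (by refine (Complex.norm_le_abs_re_add_abs_im _).trans ?_; norm_num) hd2
      have h3 := hb (-1-I) _ (by refine (Complex.norm_le_abs_re_add_abs_im _).trans ?_; norm_num) hd3
      have hsum : ‖(1+I)*((a 1 ζ - Real.pi : ℝ):ℂ)
            + (-1+I)*((a 2 ζ - 5*Real.pi/4 : ℝ):ℂ) + (-1-I)*((a 3 ζ - 3*Real.pi/2 : ℝ):ℂ)‖
          ≤ 144 * D := by
        have t1 := norm_add_le ((1+I)*((a 1 ζ - Real.pi : ℝ):ℂ)
          + (-1+I)*((a 2 ζ - 5*Real.pi/4 : ℝ):ℂ)) ((-1-I)*((a 3 ζ - 3*Real.pi/2 : ℝ):ℂ))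
        have t2 := norm_add_le ((1+I)*((a 1 ζ - Real.pi : ℝ):ℂ))
          ((-1+I)*((a 2 ζ - 5*Real.pi/4 : ℝ):ℂ))
        linarith
      rw [hzd, norm_mul]
      have h0 : ‖1/(Real.pi:ℂ)‖ = 1/Real.pi := by
        rw [norm_div, norm_one, Complex.norm_real, Real.norm_eq_abs, abs_of_pos hπ]
      rw [h0]
      have hπ3 : (1:ℝ)/Real.pi ≤ 1/3 := by
        rw [div_le_div_iff₀ hπ (by norm_num)]
        nlinarith [Real.pi_gt_three]
      have habs_nn := norm_nonneg ((1+I)*((a 1 ζ - Real.pi : ℝ):ℂ)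
        + (-1+I)*((a 2 ζ - 5*Real.pi/4 : ℝ):ℂ) + (-1-I)*((a 3 ζ - 3*Real.pi/2 : ℝ):ℂ))
      calc (1/Real.pi) * ‖(1+I)*((a 1 ζ - Real.pi : ℝ):ℂ)
            + (-1+I)*((a 2 ζ - 5*Real.pi/4 : ℝ):ℂ) + (-1-I)*((a 3 ζ - 3*Real.pi/2 : ℝ):ℂ)‖
          ≤ (1/3) * (144 * D) := mul_le_mul hπ3 hsum habs_nn (by norm_num)
        _ ≤ 100 * D := by linarith
    · -- real bound
      have hϑd : ϑ ζ - (Real.sqrt 2 / Real.pi) * (a 0 ζ - Real.pi / 4)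
          = (Real.sqrt 2 / Real.pi) * (-(a 1 ζ - Real.pi)
            + (a 2 ζ - 5*Real.pi/4) - (a 3 ζ - 3*Real.pi/2)) := by
        rw [hϑ, hE, hN, hW, hS]
        field_simp
        ring
      rw [hϑd, abs_mul]
      have hs2 : Real.sqrt 2 ≤ 2 := by
        nlinarith [Real.sq_sqrt (by norm_num : (0:ℝ) ≤ 2), Real.sqrt_nonneg 2]
      have hs2' : (0:ℝ) ≤ Real.sqrt 2 := Real.sqrt_nonneg 2
      have hfrac : |Real.sqrt 2 / Real.pi| ≤ 1 := by
        rw [_root_.abs_of_nonneg (by positivity : (0:ℝ) ≤ Real.sqrt 2 / Real.pi)]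
        rw [div_le_one hπ]
        nlinarith [Real.pi_gt_three]
      have htri : |(-(a 1 ζ - Real.pi) + (a 2 ζ - 5*Real.pi/4) - (a 3 ζ - 3*Real.pi/2))|
          ≤ 72 * D := by
        calc |(-(a 1 ζ - Real.pi) + (a 2 ζ - 5*Real.pi/4) - (a 3 ζ - 3*Real.pi/2))|
            ≤ |(-(a 1 ζ - Real.pi) + (a 2 ζ - 5*Real.pi/4))| + |a 3 ζ - 3*Real.pi/2| := abs_sub _ _
          _ ≤ (|(-(a 1 ζ - Real.pi))| + |a 2 ζ - 5*Real.pi/4|) + |a 3 ζ - 3*Real.pi/2| := by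
              gcongr; exact abs_add_le _ _
          _ ≤ (24*D + 24*D) + 24*D := by rw [abs_neg]; gcongr
          _ = 72 * D := by ring
      nlinarith [abs_nonneg (-(a 1 ζ - Real.pi) + (a 2 ζ - 5*Real.pi/4) - (a 3 ζ - 3*Real.pi/2)),
        abs_nonneg (Real.sqrt 2 / Real.pi)]
  refine ⟨part1, ⟨100, by norm_num, 1/2, by norm_num, part2⟩, ?_⟩
  -- Part 3
  set Img := (fun ζ => (z ζ, ϑ ζ)) '' ball (0:ℂ) 1 with hImg
  set T : ℝ → ℂ × ℝ := fun s =>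
    ((1 + I) / 2 + ((1 - I) / Real.pi) * (s:ℂ), (Real.sqrt 2 / Real.pi) * s) with hT
  have hTcont : Continuous T := by
    apply Continuous.prodMk
    · exact continuous_const.add (continuous_const.mul Complex.continuous_ofReal)
    · exact continuous_const.mul continuous_id
  have hIoo : ∀ s ∈ Set.Ioo (-(Real.pi/2)) (Real.pi/2), T s ∈ closure Img := by
    intro s hs
    rw [Metric.mem_closure_iff]
    intro ε hε
    have hcos : 0 < Real.cos s := Real.cos_pos_of_mem_Ioo hs
    set r : ℝ := min (Real.cos s) (min (1/2) (ε/101)) / 2 with hr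
    have hr0 : 0 < r := by
      apply div_pos _ (by norm_num : (0:ℝ) < 2)
      exact lt_min hcos (lt_min (by norm_num) (by positivity))
    have hrc : r ≤ Real.cos s / 2 := by
      rw [hr]; gcongr; exact min_le_left _ _
    have hrδ : r < 1/2 := by
      rw [hr]
      have h1 : min (Real.cos s) (min (1/2) (ε/101)) ≤ 1/2 :=
        (min_le_right _ _).trans (min_le_left _ _)
      linarith
    have hrε : r ≤ ε/202 := by
      rw [hr]
      have h1 : min (Real.cos s) (min (1/2) (ε/101)) ≤ ε/101 :=
        (min_le_right _ _).trans (min_le_right _ _)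
      linarith
    set ζr : ℂ := ζ₀ - (r:ℂ) * Complex.exp (((Real.pi/4 + s : ℝ):ℂ) * I) with hζr
    have hmulc : Complex.exp (((Real.pi/4 : ℝ):ℂ) * I) * Complex.exp (((s:ℝ):ℂ) * I)
        = Complex.exp (((Real.pi/4 + s : ℝ):ℂ) * I) := exp_comb _ _
    have hfact : ζr = ζ₀ * (1 - (r:ℂ) * Complex.exp (((s:ℝ):ℂ) * I)) := by
      rw [hζr, ← hmulc, hζ₀]; ring
    have hsq : (‖1 - (r:ℂ) * Complex.exp (((s:ℝ):ℂ) * I)‖)^2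
        = 1 - 2*r*Real.cos s + r^2 := by
      rw [Complex.sq_norm, Complex.normSq_apply, exp_real_mul_I]
      simp [Complex.sub_re, Complex.sub_im, Complex.mul_re, Complex.mul_im]
      rw [Complex.cos_ofReal_re, Complex.sin_ofReal_re]
      nlinarith [Real.sin_sq_add_cos_sq s]
    have habsr : ‖ζr‖ < 1 := by
      rw [hfact, norm_mul, hζ₀, Complex.norm_exp_ofReal_mul_I, one_mul]
      nlinarith [hsq, norm_nonneg (1 - (r:ℂ) * Complex.exp (((s:ℝ):ℂ) * I)), hr0, hrc, hcos]
    have hball : ζr ∈ ball (0:ℂ) 1 := by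
      rw [mem_ball, dist_zero_right, ]; exact habsr
    have hdist : ‖ζr - ζ₀‖ = r := by
      have hdd : ζr - ζ₀ = -((r:ℂ) * Complex.exp (((Real.pi/4 + s : ℝ):ℂ) * I)) := by
        rw [hζr]; ring
      rw [hdd, norm_neg, norm_mul, Complex.norm_real, Real.norm_eq_abs,
        Complex.norm_exp_ofReal_mul_I, _root_.abs_of_pos hr0, mul_one]
    have hcanc : Complex.exp ((((-(Real.pi/4)):ℝ):ℂ) * I) * Complex.exp (((Real.pi/4:ℝ):ℂ) * I)
        = 1 := by
      rw [exp_comb]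
      norm_num
    have ha0r : a 0 ζr = Real.pi/4 + s := by
      rw [hbr 0 ζr hball, hA0]
      have hu : (1:ℂ) - Complex.exp (-((Real.pi/4:ℝ):ℂ) * I) * ζr
          = (r:ℂ) * Complex.exp (((s:ℝ):ℂ) * I) := by
        rw [hfact, hζ₀,
          show -((Real.pi/4:ℝ):ℂ) * I = ((((-(Real.pi/4))):ℝ):ℂ) * I by push_cast; ring,
          ← mul_assoc, hcanc]
        ring
      rw [hu, exp_real_mul_I, Complex.arg_real_mul _ hr0, Complex.ofReal_cos,
        Complex.ofReal_sin, Complex.arg_cos_add_sin_mul_I]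
      constructor
      · have := hs.1; linarith [Real.pi_pos]
      · have := hs.2; linarith [Real.pi_pos]
    obtain ⟨hbz, hbϑ⟩ := part2 ζr hball (by rw [hdist]; exact hrδ)
    rw [hdist] at hbz hbϑ
    refine ⟨(z ζr, ϑ ζr), ⟨ζr, hball, rfl⟩, ?_⟩
    rw [Prod.dist_eq]
    have hεr : 100 * r < ε := by linarith
    apply max_lt
    · have he1 : (1 + I) / 2 + ((1 - I) / (Real.pi:ℂ)) * (((a 0 ζr : ℝ):ℂ) - (Real.pi:ℂ) / 4)
          = (T s).1 := by
        rw [ha0r, hT]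
        push_cast
        ring
      rw [Complex.dist_eq, ← he1, norm_sub_rev]
      exact lt_of_le_of_lt hbz hεr
    · have he2 : (Real.sqrt 2 / Real.pi) * (a 0 ζr - Real.pi/4) = (T s).2 := by
        rw [ha0r, hT]
        ring_nf
      rw [Real.dist_eq, ← he2, abs_sub_comm]
      exact lt_of_le_of_lt hbϑ hεr
  have hIcc : ∀ s ∈ Set.Icc (-(Real.pi/2)) (Real.pi/2), T s ∈ closure Img := by
    intro s hs
    have hne : -(Real.pi/2) ≠ Real.pi/2 := by
      have := Real.pi_pos; intro h; linarith [h]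
    have h1 : T s ∈ T '' closure (Set.Ioo (-(Real.pi/2)) (Real.pi/2)) :=
      ⟨s, by rw [closure_Ioo hne]; exact hs, rfl⟩
    have h2 := image_closure_subset_closure_image hTcont h1
    have h3 : T '' Set.Ioo (-(Real.pi/2)) (Real.pi/2) ⊆ closure Img := by
      rintro p ⟨t, ht, rfl⟩; exact hIoo t ht
    have h4 := closure_mono h3 h2
    rwa [closure_closure] at h4
  intro p hp
  obtain ⟨u, v, hu, hv, huv, hp⟩ := hp
  have hv' : v = 1 - u := by linarith
  subst hv'
  have hu1 : u ≤ 1 := by linarith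
  have hsmem : u * (Real.pi/2) + (1-u) * (-(Real.pi/2)) ∈ Set.Icc (-(Real.pi/2)) (Real.pi/2) := by
    constructor <;> nlinarith [Real.pi_pos]
  have hTp : T (u * (Real.pi/2) + (1-u) * (-(Real.pi/2))) = p := by
    rw [← hp, hT]
    have : u • ((1 : ℂ), (Real.sqrt 2 / 2 : ℝ)) + (1-u) • ((I : ℂ), -(Real.sqrt 2 / 2 : ℝ))
        = ((u:ℂ) * 1 + ((1-u:ℝ):ℂ) * I, u * (Real.sqrt 2 / 2) + (1-u) * (-(Real.sqrt 2 / 2))) := by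
      simp [Prod.ext_iff, Complex.real_smul]
    rw [this]
    apply Prod.ext
    · simp only
      push_cast
      field_simp
      ring
    · simp only
      field_simp
  rw [← hTp]
  exact hIcc _ hsmem
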